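/- Suppose f : ℤ → ℤ[t^{±1}] satisfies, for all sufficiently large n, f(n+1) = −(P(t, t^{−2−2n})/P(t, t^{2n}))·f(n) for a fixed nonzero P ∈ ℤ[t^{±1}, M^{±1}] (with P(t, t^{2n}) ≠ 0 for large n), and f(n) ≠ 0 for large n. Then the breadth of f(n) is eventually a linear function of n. -/

import Mathlib

/-- The breadth `d₊ − d₋` of a nonzero Laurent polynomial (junk value `0` for `0`). -/
noncomputable def breadthL (f : LaurentPolynomial ℤ) : ℤ :=
  if h : f.coeff.support.Nonempty then f.coeff.support.max' h - f.coeff.support.min' h else 0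

/-- Substitution `M = t^s` in `P = Σ_k a_k(t) M^k ∈ ℤ[t^{±1}, M^{±1}]`. -/
noncomputable def subM (P : LaurentPolynomial (LaurentPolynomial ℤ)) (s : ℤ) :
    LaurentPolynomial ℤ :=
  P.coeff.sum fun k a => a * LaurentPolynomial.T (s * k)

namespace BreadthAux

noncomputable def topd (f : LaurentPolynomial ℤ) : ℤ :=
  if h : f.coeff.support.Nonempty then f.coeff.support.max' h else 0

noncomputable def botd (f : LaurentPolynomial ℤ) : ℤ :=
  if h : f.coeff.support.Nonempty then f.coeff.support.min' h else 0

lemma supp_ne {f : LaurentPolynomial ℤ} (hf : f ≠ 0) : f.coeff.support.Nonempty :=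
  Finsupp.support_nonempty_iff.mpr (mt AddMonoidAlgebra.coeff_eq_zero.mp hf)

lemma breadthL_eq {f : LaurentPolynomial ℤ} (hf : f ≠ 0) :
    breadthL f = topd f - botd f := by
  rw [breadthL, topd, botd, dif_pos (supp_ne hf), dif_pos (supp_ne hf),
    dif_pos (supp_ne hf)]

lemma topd_coeff {f : LaurentPolynomial ℤ} (hf : f ≠ 0) : f.coeff (topd f) ≠ 0 := by
  rw [topd, dif_pos (supp_ne hf)]
  exact Finsupp.mem_support_iff.mp (Finset.max'_mem _ _)

lemma botd_coeff {f : LaurentPolynomial ℤ} (hf : f ≠ 0) : f.coeff (botd f) ≠ 0 := by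
  rw [botd, dif_pos (supp_ne hf)]
  exact Finsupp.mem_support_iff.mp (Finset.min'_mem _ _)

lemma le_topd {f : LaurentPolynomial ℤ} {d : ℤ} (hd : f.coeff d ≠ 0) : d ≤ topd f := by
  have hf : f ≠ 0 := fun h => hd (by simp [h])
  rw [topd, dif_pos (supp_ne hf)]
  exact Finset.le_max' _ _ (Finsupp.mem_support_iff.mpr hd)

lemma botd_le {f : LaurentPolynomial ℤ} {d : ℤ} (hd : f.coeff d ≠ 0) : botd f ≤ d := by
  have hf : f ≠ 0 := fun h => hd (by simp [h])
  rw [botd, dif_pos (supp_ne hf)]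
  exact Finset.min'_le _ _ (Finsupp.mem_support_iff.mpr hd)

lemma coeff_eq_zero_of_topd_lt {f : LaurentPolynomial ℤ} {d : ℤ} (h : topd f < d) :
    f.coeff d = 0 := by
  by_contra hc; exact absurd (le_topd hc) (not_le.mpr h)

lemma coeff_eq_zero_of_lt_botd {f : LaurentPolynomial ℤ} {d : ℤ} (h : d < botd f) :
    f.coeff d = 0 := by
  by_contra hc; exact absurd (botd_le hc) (not_le.mpr h)

lemma botd_le_topd {f : LaurentPolynomial ℤ} (hf : f ≠ 0) : botd f ≤ topd f :=
  botd_le (topd_coeff hf)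

lemma topd_eq {f : LaurentPolynomial ℤ} {D : ℤ} (h1 : f.coeff D ≠ 0)
    (h2 : ∀ d, D < d → f.coeff d = 0) : topd f = D := by
  have hf : f ≠ 0 := fun h => h1 (by simp [h])
  refine le_antisymm (le_of_not_gt fun hlt => topd_coeff hf (h2 _ hlt)) (le_topd h1)

lemma botd_eq {f : LaurentPolynomial ℤ} {D : ℤ} (h1 : f.coeff D ≠ 0)
    (h2 : ∀ d, d < D → f.coeff d = 0) : botd f = D := by
  have hf : f ≠ 0 := fun h => h1 (by simp [h])
  refine le_antisymm (botd_le h1) (le_of_not_gt fun hlt => botd_coeff hf (h2 _ hlt))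

lemma coeff_mul_topd {f g : LaurentPolynomial ℤ} (hf : f ≠ 0) (hg : g ≠ 0) :
    (f * g).coeff (topd f + topd g) = f.coeff (topd f) * g.coeff (topd g) := by
  classical
  rw [AddMonoidAlgebra.coeff_mul, Finsupp.sum]
  rw [Finset.sum_eq_single (topd f)]
  · rw [Finsupp.sum, Finset.sum_eq_single (topd g)]
    · rw [if_pos rfl]
    · intro c hc hne
      have hcle : c ≤ topd g := le_topd (Finsupp.mem_support_iff.mp hc)
      exact if_neg fun hcon => hne (by omega)
    · intro habs
      exact absurd (Finsupp.mem_support_iff.mpr (topd_coeff hg)) habs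
  · intro b hb hne
    apply Finset.sum_eq_zero
    intro c hc
    have hb' : b < topd f :=
      lt_of_le_of_ne (le_topd (Finsupp.mem_support_iff.mp hb)) hne
    have hc' : c ≤ topd g := le_topd (Finsupp.mem_support_iff.mp hc)
    exact if_neg (by omega)
  · intro habs
    exact absurd (Finsupp.mem_support_iff.mpr (topd_coeff hf)) habs

lemma coeff_mul_botd {f g : LaurentPolynomial ℤ} (hf : f ≠ 0) (hg : g ≠ 0) :
    (f * g).coeff (botd f + botd g) = f.coeff (botd f) * g.coeff (botd g) := by
  classical
  rw [AddMonoidAlgebra.coeff_mul, Finsupp.sum]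
  rw [Finset.sum_eq_single (botd f)]
  · rw [Finsupp.sum, Finset.sum_eq_single (botd g)]
    · rw [if_pos rfl]
    · intro c hc hne
      have hcle : botd g ≤ c := botd_le (Finsupp.mem_support_iff.mp hc)
      exact if_neg fun hcon => hne (by omega)
    · intro habs
      exact absurd (Finsupp.mem_support_iff.mpr (botd_coeff hg)) habs
  · intro b hb hne
    apply Finset.sum_eq_zero
    intro c hc
    have hb' : botd f < b :=
      lt_of_le_of_ne (botd_le (Finsupp.mem_support_iff.mp hb)) (Ne.symm hne)
    have hc' : botd g ≤ c := botd_le (Finsupp.mem_support_iff.mp hc)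
    exact if_neg (by omega)
  · intro habs
    exact absurd (Finsupp.mem_support_iff.mpr (botd_coeff hf)) habs

lemma mul_ne {f g : LaurentPolynomial ℤ} (hf : f ≠ 0) (hg : g ≠ 0) :
    f * g ≠ 0 := by
  intro h
  have := coeff_mul_topd hf hg
  rw [h] at this
  exact mul_ne_zero (topd_coeff hf) (topd_coeff hg) (by simpa using this.symm)

lemma topd_mul {f g : LaurentPolynomial ℤ} (hf : f ≠ 0) (hg : g ≠ 0) :
    topd (f * g) = topd f + topd g := by
  refine topd_eq (by
    rw [coeff_mul_topd hf hg]
    exact mul_ne_zero (topd_coeff hf) (topd_coeff hg)) ?_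
  intro d hd
  classical
  rw [AddMonoidAlgebra.coeff_mul, Finsupp.sum]
  apply Finset.sum_eq_zero
  intro b hb
  rw [Finsupp.sum]
  apply Finset.sum_eq_zero
  intro c hc
  have hb' : b ≤ topd f := le_topd (Finsupp.mem_support_iff.mp hb)
  have hc' : c ≤ topd g := le_topd (Finsupp.mem_support_iff.mp hc)
  exact if_neg (by omega)

lemma botd_mul {f g : LaurentPolynomial ℤ} (hf : f ≠ 0) (hg : g ≠ 0) :
    botd (f * g) = botd f + botd g := by
  refine botd_eq (by
    rw [coeff_mul_botd hf hg]
    exact mul_ne_zero (botd_coeff hf) (botd_coeff hg)) ?_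
  intro d hd
  classical
  rw [AddMonoidAlgebra.coeff_mul, Finsupp.sum]
  apply Finset.sum_eq_zero
  intro b hb
  rw [Finsupp.sum]
  apply Finset.sum_eq_zero
  intro c hc
  have hb' : botd f ≤ b := botd_le (Finsupp.mem_support_iff.mp hb)
  have hc' : botd g ≤ c := botd_le (Finsupp.mem_support_iff.mp hc)
  exact if_neg (by omega)

lemma topd_neg (f : LaurentPolynomial ℤ) : topd (-f) = topd f := by
  rw [topd, topd, AddMonoidAlgebra.coeff_neg, Finsupp.support_neg]

lemma botd_neg (f : LaurentPolynomial ℤ) : botd (-f) = botd f := by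
  rw [botd, botd, AddMonoidAlgebra.coeff_neg, Finsupp.support_neg]

lemma subM_coeff (P : LaurentPolynomial (LaurentPolynomial ℤ)) (s d : ℤ) :
    (subM P s).coeff d = ∑ k ∈ P.coeff.support, (P.coeff k).coeff (d - s * k) := by
  rw [subM, AddMonoidAlgebra.coeff_finsuppSum, Finsupp.sum, Finsupp.finset_sum_apply]
  refine Finset.sum_congr rfl fun k hk => ?_
  rw [LaurentPolynomial.T, AddMonoidAlgebra.coeff_mul_single_apply, mul_one, sub_eq_add_neg]

lemma subM_topd {P : LaurentPolynomial (LaurentPolynomial ℤ)} {s K : ℤ}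
    (hK : K ∈ P.coeff.support)
    (hlt : ∀ k ∈ P.coeff.support, k ≠ K → s * k + topd (P.coeff k) < s * K + topd (P.coeff K)) :
    subM P s ≠ 0 ∧ topd (subM P s) = s * K + topd (P.coeff K) := by
  have hPK : P.coeff K ≠ 0 := Finsupp.mem_support_iff.mp hK
  have hcoeff : (subM P s).coeff (s * K + topd (P.coeff K)) = (P.coeff K).coeff (topd (P.coeff K)) := by
    rw [subM_coeff]
    have h0 : ∀ k ∈ P.coeff.support, k ≠ K → (P.coeff k).coeff ((s * K + topd (P.coeff K)) - s * k) = 0 := by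
      intro k hk hne
      apply coeff_eq_zero_of_topd_lt
      have := hlt k hk hne
      omega
    rw [Finset.sum_eq_single_of_mem K hK h0]
    congr 1; ring
  have h1 : (subM P s).coeff (s * K + topd (P.coeff K)) ≠ 0 := by
    rw [hcoeff]; exact topd_coeff hPK
  have h0 : subM P s ≠ 0 := fun h => h1 (by simp [h])
  refine ⟨h0, topd_eq h1 ?_⟩
  intro d hd
  rw [subM_coeff]
  apply Finset.sum_eq_zero
  intro k hk
  apply coeff_eq_zero_of_topd_lt
  by_cases hne : k = K
  · subst hne; omega
  · have := hlt k hk hne; omega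

lemma subM_botd {P : LaurentPolynomial (LaurentPolynomial ℤ)} {s K : ℤ}
    (hK : K ∈ P.coeff.support)
    (hgt : ∀ k ∈ P.coeff.support, k ≠ K → s * K + botd (P.coeff K) < s * k + botd (P.coeff k)) :
    subM P s ≠ 0 ∧ botd (subM P s) = s * K + botd (P.coeff K) := by
  have hPK : P.coeff K ≠ 0 := Finsupp.mem_support_iff.mp hK
  have hcoeff : (subM P s).coeff (s * K + botd (P.coeff K)) = (P.coeff K).coeff (botd (P.coeff K)) := by
    rw [subM_coeff]
    have h0 : ∀ k ∈ P.coeff.support, k ≠ K → (P.coeff k).coeff ((s * K + botd (P.coeff K)) - s * k) = 0 := by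
      intro k hk hne
      apply coeff_eq_zero_of_lt_botd
      have := hgt k hk hne
      omega
    rw [Finset.sum_eq_single_of_mem K hK h0]
    congr 1; ring
  have h1 : (subM P s).coeff (s * K + botd (P.coeff K)) ≠ 0 := by
    rw [hcoeff]; exact botd_coeff hPK
  have h0 : subM P s ≠ 0 := fun h => h1 (by simp [h])
  refine ⟨h0, botd_eq h1 ?_⟩
  intro d hd
  rw [subM_coeff]
  apply Finset.sum_eq_zero
  intro k hk
  apply coeff_eq_zero_of_lt_botd
  by_cases hne : k = K
  · subst hne; omega
  · have := hgt k hk hne; omega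

end BreadthAux

open BreadthAux

/-- If `f : ℤ → ℤ[t^{±1}]` satisfies, for all large `n`,
`f(n+1) = −(P(t, t^{−2−2n}) / P(t, t^{2n})) f(n)` (stated denominator-free as
`P(t, t^{2n}) f(n+1) = −P(t, t^{−2−2n}) f(n)`) for a fixed nonzero
`P ∈ ℤ[t^{±1}, M^{±1}]` with `P(t, t^{2n}) ≠ 0` and `f(n) ≠ 0` for large `n`,
then the breadth of `f(n)` is eventually a linear function of `n`. -/
theorem breadth_eventually_linear
    (P : LaurentPolynomial (LaurentPolynomial ℤ)) (hP : P ≠ 0)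
    (f : ℤ → LaurentPolynomial ℤ) (N : ℤ)
    (h : ∀ n : ℤ, N ≤ n →
      subM P (2 * n) ≠ 0 ∧ f n ≠ 0 ∧
      subM P (2 * n) * f (n + 1) = -(subM P (-2 - 2 * n)) * f n) :
    ∃ (a b N' : ℤ), ∀ n : ℤ, N' ≤ n → breadthL (f n) = a * n + b := by
  classical
  have hPs : P.coeff.support.Nonempty := Finsupp.support_nonempty_iff.mpr (mt AddMonoidAlgebra.coeff_eq_zero.mp hP)
  set K := P.coeff.support.max' hPs with hKdef
  set k0 := P.coeff.support.min' hPs with hkdef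
  have hKmem : K ∈ P.coeff.support := Finset.max'_mem _ _
  have hkmem : k0 ∈ P.coeff.support := Finset.min'_mem _ _
  set Bp := (P.coeff.support.image fun j => topd (P.coeff j)).max' (hPs.image _) with hBpdef
  set Bm := (P.coeff.support.image fun j => botd (P.coeff j)).min' (hPs.image _) with hBmdef
  have hBp : ∀ j ∈ P.coeff.support, topd (P.coeff j) ≤ Bp := by
    intro j hj
    rw [hBpdef]
    exact Finset.le_max' _ (topd (P.coeff j)) (Finset.mem_image_of_mem (fun j => topd (P.coeff j)) hj)
  have hBm : ∀ j ∈ P.coeff.support, Bm ≤ botd (P.coeff j) := by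
    intro j hj
    rw [hBmdef]
    exact Finset.min'_le _ (botd (P.coeff j)) (Finset.mem_image_of_mem (fun j => botd (P.coeff j)) hj)
  have hbt : ∀ j ∈ P.coeff.support, botd (P.coeff j) ≤ topd (P.coeff j) := fun j hj =>
    botd_le_topd (Finsupp.mem_support_iff.mp hj)
  set C := Bp - Bm with hC
  have hC0 : 0 ≤ C := by
    have h1 := hBp K hKmem; have h2 := hBm K hKmem; have h3 := hbt K hKmem; omega
  have pos : ∀ s : ℤ, C + 1 ≤ s → subM P s ≠ 0 ∧
      topd (subM P s) = s * K + topd (P.coeff K) ∧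
      botd (subM P s) = s * k0 + botd (P.coeff k0) := by
    intro s hs
    have hs0 : 0 ≤ s := by omega
    have hlt : ∀ j ∈ P.coeff.support, j ≠ K → s * j + topd (P.coeff j) < s * K + topd (P.coeff K) := by
      intro j hj hne
      have hjK : j < K := lt_of_le_of_ne (Finset.le_max' _ _ hj) hne
      have hmul : s ≤ s * (K - j) := le_mul_of_one_le_right hs0 (by omega)
      have hexp : s * (K - j) = s * K - s * j := by ring
      have h1 := hBp j hj
      have h2 := hBm K hKmem
      have h3 := hbt K hKmem
      linarith
    have hgt : ∀ j ∈ P.coeff.support, j ≠ k0 → s * k0 + botd (P.coeff k0) < s * j + botd (P.coeff j) := by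
      intro j hj hne
      have hjk : k0 < j := lt_of_le_of_ne (Finset.min'_le _ _ hj) (Ne.symm hne)
      have hmul : s ≤ s * (j - k0) := le_mul_of_one_le_right hs0 (by omega)
      have hexp : s * (j - k0) = s * j - s * k0 := by ring
      have h1 := hBm j hj
      have h2 := hBp k0 hkmem
      have h3 := hbt k0 hkmem
      linarith
    have htop := subM_topd hKmem hlt
    have hbot := subM_botd hkmem hgt
    exact ⟨htop.1, htop.2, hbot.2⟩
  have neg : ∀ s : ℤ, s ≤ -(C + 1) → subM P s ≠ 0 ∧
      topd (subM P s) = s * k0 + topd (P.coeff k0) ∧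
      botd (subM P s) = s * K + botd (P.coeff K) := by
    intro s hs
    have hs0 : 0 ≤ -s := by omega
    have hlt : ∀ j ∈ P.coeff.support, j ≠ k0 → s * j + topd (P.coeff j) < s * k0 + topd (P.coeff k0) := by
      intro j hj hne
      have hjk : k0 < j := lt_of_le_of_ne (Finset.min'_le _ _ hj) (Ne.symm hne)
      have hmul : -s ≤ -s * (j - k0) := le_mul_of_one_le_right hs0 (by omega)
      have hexp : -s * (j - k0) = s * k0 - s * j := by ring
      have h1 := hBp j hj
      have h2 := hBm k0 hkmem
      have h3 := hbt k0 hkmem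
      linarith
    have hgt : ∀ j ∈ P.coeff.support, j ≠ K → s * K + botd (P.coeff K) < s * j + botd (P.coeff j) := by
      intro j hj hne
      have hjK : j < K := lt_of_le_of_ne (Finset.le_max' _ _ hj) hne
      have hmul : -s ≤ -s * (K - j) := le_mul_of_one_le_right hs0 (by omega)
      have hexp : -s * (K - j) = s * j - s * K := by ring
      have h1 := hBm j hj
      have h2 := hBp K hKmem
      have h3 := hbt K hKmem
      linarith
    have htop := subM_topd hkmem hlt
    have hbot := subM_botd hKmem hgt
    exact ⟨htop.1, htop.2, hbot.2⟩
  set c := 2 * (K - k0) + (topd (P.coeff k0) + botd (P.coeff k0)) -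
      (topd (P.coeff K) + botd (P.coeff K)) with hc
  set N2 := max N (C + 1) with hN2
  have step : ∀ n : ℤ, N2 ≤ n → breadthL (f (n + 1)) = breadthL (f n) + c := by
    intro n hn
    have hnN : N ≤ n := le_trans (le_max_left _ _) hn
    have hnC : C + 1 ≤ n := le_trans (le_max_right _ _) hn
    obtain ⟨hs2n, hfn, heq⟩ := h n hnN
    have hfn1 : f (n + 1) ≠ 0 := (h (n + 1) (by omega)).2.1
    have hposn := pos (2 * n) (by omega)
    have hnegn := neg (-2 - 2 * n) (by omega)
    have hsub2 : subM P (-2 - 2 * n) ≠ 0 := hnegn.1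
    have hA : topd (subM P (2 * n)) + topd (f (n + 1)) =
        topd (subM P (-2 - 2 * n)) + topd (f n) := by
      have hca := congrArg topd heq
      rwa [topd_mul hs2n hfn1, topd_mul (neg_ne_zero.mpr hsub2) hfn, topd_neg] at hca
    have hB : botd (subM P (2 * n)) + botd (f (n + 1)) =
        botd (subM P (-2 - 2 * n)) + botd (f n) := by
      have hcb := congrArg botd heq
      rwa [botd_mul hs2n hfn1, botd_mul (neg_ne_zero.mpr hsub2) hfn, botd_neg] at hcb
    rw [hposn.2.1, hnegn.2.1] at hA
    rw [hposn.2.2, hnegn.2.2] at hB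
    rw [breadthL_eq hfn1, breadthL_eq hfn]
    linarith
  refine ⟨c, breadthL (f N2) - c * N2, N2, Int.le_induction ?_ ?_⟩
  · ring
  · intro m hm ih
    rw [step m hm, ih]; ring
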